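/- q-derivatives of q-Hermite times q-Gaussian: ∂^t(h̃_l(x;q) e_{q²}(-x²)) = ((-1)^t q^{lt + (t²-t)/2}/(1-q)^t) h̃_{l+t}(x;q) e_{q²}(-x²), where h̃_l denotes the discrete q-Hermite II polynomial. -/

import Mathlib

open scoped BigOperators

noncomputable section

/-- finite q-Pochhammer symbol `(a;q)_k` -/
def qPoch (q a : ℝ) (k : ℕ) : ℝ := ∏ j ∈ Finset.range k, (1 - a * q ^ j)

/-- infinite q-Pochhammer symbol `(a;q)_∞` -/
def qPochInf (q a : ℝ) : ℝ := ∏' j : ℕ, (1 - a * q ^ j)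

/-- q-integral over the lattice `L(γ) = {± q^k γ}` -/
def qInt (q γ : ℝ) (f : ℝ → ℝ) : ℝ :=
  (1 - q) * ∑' k : ℤ, (q ^ k * γ) * (f (q ^ k * γ) + f (-(q ^ k * γ)))

/-- k-th q-moment -/
def qMoment (q γ : ℝ) (e : ℕ) (f : ℝ → ℝ) : ℝ :=
  q ^ (e * (e + 1) / 2) * qInt q γ (fun x => f x * x ^ e)

/-- k-th strict q-moment -/
def qNu (q γ : ℝ) (e : ℕ) (f : ℝ → ℝ) : ℝ :=
  q ^ (e * (e + 1) / 2) * qInt q γ (fun x => |f x * x ^ e|)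

/-- q-derivative -/
def qDeriv (q : ℝ) (f : ℝ → ℝ) : ℝ → ℝ := fun x => (f x - f (q * x)) / ((1 - q) * x)

/-- q-factorial `[e]_q!` -/
def qFact (q : ℝ) (e : ℕ) : ℝ := qPoch q q e / (1 - q) ^ e

/-- q-binomial coefficient -/
def qBinom (q : ℝ) (n k : ℕ) : ℝ := qPoch q q n / (qPoch q q k * qPoch q q (n - k))

/-- q-convolution -/
def qConv (q γ : ℝ) (f g : ℝ → ℝ) : ℝ → ℝ :=
  fun x => ∑' e : ℕ, (-1) ^ e * qMoment q γ e f / qFact q e * (qDeriv q)^[e] g x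

/-- the q-Gaussian `e_{q²}(-x²)` -/
def qGauss (q : ℝ) : ℝ → ℝ := fun x => 1 / qPochInf (q ^ 2) (-(x ^ 2))

/-- discrete q-Hermite II polynomials -/
def qHermiteII (q : ℝ) (k : ℕ) (x : ℝ) : ℝ :=
  qPoch q q k * ∑ l ∈ Finset.range (k / 2 + 1),
    (-1) ^ l * q ^ (2 * l ^ 2 + l) / q ^ (2 * l * k) * x ^ (k - 2 * l) /
      (qPoch (q ^ 2) (q ^ 2) l * qPoch q q (k - 2 * l))

/-- discrete delta function on the lattice, supported at `η γ q^p` -/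
def qdelta (q γ η : ℝ) (p : ℤ) : ℝ → ℝ := fun x => if x = η * γ * q ^ p then 1 else 0


section Aux

/-- coefficient of `x^(k-2m)` in the discrete q-Hermite II polynomial -/
def co (q : ℝ) (k m : ℕ) : ℝ :=
  qPoch q q k *
    ((-1) ^ m * q ^ (2 * m ^ 2 + m) / q ^ (2 * m * k) /
      (qPoch (q ^ 2) (q ^ 2) m * qPoch q q (k - 2 * m)))

lemma qHermiteII_eq (q : ℝ) (k : ℕ) (x : ℝ) :
    qHermiteII q k x = ∑ m ∈ Finset.range (k / 2 + 1), co q k m * x ^ (k - 2 * m) := by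
  unfold qHermiteII co
  rw [Finset.mul_sum]
  exact Finset.sum_congr rfl fun m _ => by ring

variable {q : ℝ}

lemma one_sub_mul_pow_pos (hq : q ∈ Set.Ioo (0:ℝ) 1) (j : ℕ) : 0 < 1 - q * q ^ j := by
  have h1 : q ^ j ≤ 1 := pow_le_one₀ hq.1.le hq.2.le
  nlinarith [hq.1, hq.2]

lemma qPoch_pos (hq : q ∈ Set.Ioo (0:ℝ) 1) (n : ℕ) : 0 < qPoch q q n :=
  Finset.prod_pos fun j _ => one_sub_mul_pow_pos hq j

lemma sq_mem (hq : q ∈ Set.Ioo (0:ℝ) 1) : q ^ 2 ∈ Set.Ioo (0:ℝ) 1 :=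
  ⟨pow_pos hq.1 2, pow_lt_one₀ hq.1.le hq.2 two_ne_zero⟩

lemma qPoch_succ' (Q a : ℝ) (n : ℕ) :
    qPoch Q a (n + 1) = qPoch Q a n * (1 - a * Q ^ n) := Finset.prod_range_succ _ _

lemma qPoch_zero' (Q a : ℝ) : qPoch Q a 0 = 1 := Finset.prod_range_zero _

lemma co_zero (hq : q ∈ Set.Ioo (0:ℝ) 1) (k : ℕ) : co q k 0 = 1 := by
  have h := (qPoch_pos hq k).ne'
  simp [co, qPoch_zero']
  field_simp

lemma coMain (hq : q ∈ Set.Ioo (0:ℝ) 1) (s r : ℕ) :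
    q ^ (2 * s + 2 + r) * co q (2 * s + 2 + r + 1) (s + 1) =
      co q (2 * s + 2 + r) (s + 1) * q ^ r -
        co q (2 * s + 2 + r) s * (1 - q ^ (r + 2)) := by
  have hq0 : q ≠ 0 := hq.1.ne'
  have hPk := (qPoch_pos hq (2 * s + 2 + r)).ne'
  have hPr := (qPoch_pos hq r).ne'
  have hQs := (qPoch_pos (sq_mem hq) s).ne'
  have e1 : 2 * s + 2 + r + 1 - 2 * (s + 1) = r + 1 := by omega
  have e2 : 2 * s + 2 + r - 2 * (s + 1) = r := by omega
  have e3 : 2 * s + 2 + r - 2 * s = r + 2 := by omega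
  unfold co
  rw [e1, e2, e3, qPoch_succ' q q (2 * s + 2 + r), qPoch_succ' q q (r + 1), qPoch_succ' q q r,
    qPoch_succ' (q ^ 2) (q ^ 2) s]
  have h1 := (one_sub_mul_pow_pos hq (2 * s + 2 + r)).ne'
  have h2 := (one_sub_mul_pow_pos hq (r + 1)).ne'
  have h3 := (one_sub_mul_pow_pos hq r).ne'
  have h4 := (one_sub_mul_pow_pos (sq_mem hq) s).ne'
  field_simp
  ring

lemma coEdge (hq : q ∈ Set.Ioo (0:ℝ) 1) (s : ℕ) :
    q ^ (2 * s + 1) * co q (2 * s + 2) (s + 1) =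
      -(co q (2 * s + 1) s * (1 - q ^ (1 : ℕ))) := by
  have hq0 : q ≠ 0 := hq.1.ne'
  have hPk := (qPoch_pos hq (2 * s + 1)).ne'
  have hQs := (qPoch_pos (sq_mem hq) s).ne'
  have e1 : 2 * s + 2 - 2 * (s + 1) = 0 := by omega
  have e2 : 2 * s + 1 - 2 * s = 1 := by omega
  unfold co
  rw [e1, e2, qPoch_zero', qPoch_succ' q q (2 * s + 1), qPoch_succ' q q 0,
    qPoch_succ' (q ^ 2) (q ^ 2) s, qPoch_zero']
  have h1 := (one_sub_mul_pow_pos hq (2 * s + 1)).ne'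
  have h2 : 1 - q ≠ 0 := by have := hq.2; intro h; nlinarith
  have h4 := (one_sub_mul_pow_pos (sq_mem hq) s).ne'
  simp only [pow_zero, mul_one, pow_one]
  field_simp
  ring

lemma mult_aux (hQ : q ∈ Set.Ioo (0:ℝ) 1) (c : ℝ) (hc : 0 ≤ c) :
    Multipliable (fun j : ℕ => 1 + c * q ^ j) := by
  have hfac : ∀ n : ℕ, 0 < 1 + c * q ^ n := fun n => by
    have : 0 ≤ c * q ^ n := mul_nonneg hc (pow_nonneg hQ.1.le n)
    linarith
  apply Real.multipliable_of_summable_log (fun n => hfac n)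
  have hs : Summable (fun n : ℕ => c * q ^ n) :=
    (summable_geometric_of_lt_one hQ.1.le hQ.2).mul_left _
  apply Summable.of_nonneg_of_le (fun n => ?_) (fun n => ?_) hs
  · exact Real.log_nonneg (by nlinarith [mul_nonneg hc (pow_nonneg hQ.1.le n)])
  · have := Real.log_le_sub_one_of_pos (hfac n)
    linarith

lemma qGauss_shift (hq : q ∈ Set.Ioo (0:ℝ) 1) (x : ℝ) :
    qGauss q (q * x) = (1 + x ^ 2) * qGauss q x := by
  have hQ : q ^ 2 ∈ Set.Ioo (0:ℝ) 1 := sq_mem hq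
  have hmult : Multipliable (fun j : ℕ => 1 + (x ^ 2 * q ^ 2) * (q ^ 2) ^ j) :=
    mult_aux hQ _ (mul_nonneg (sq_nonneg x) (sq_nonneg q))
  have key : qPochInf (q ^ 2) (-(x ^ 2)) = (1 + x ^ 2) * qPochInf (q ^ 2) (-((q * x) ^ 2)) := by
    have h1 : qPochInf (q ^ 2) (-(x ^ 2)) = ∏' j : ℕ, (1 + x ^ 2 * (q ^ 2) ^ j) := by
      unfold qPochInf; congr 1; ext j; ring
    have h2 : qPochInf (q ^ 2) (-((q * x) ^ 2)) =
        ∏' j : ℕ, (1 + x ^ 2 * (q ^ 2) ^ (j + 1)) := by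
      unfold qPochInf; congr 1; ext j; rw [pow_succ]; ring
    have hm2 : Multipliable (fun j : ℕ => 1 + x ^ 2 * (q ^ 2) ^ (j + 1)) := by
      refine hmult.congr fun j => ?_
      rw [pow_succ]; ring
    rw [h1, h2, tprod_eq_zero_mul' (f := fun j : ℕ => 1 + x ^ 2 * (q ^ 2) ^ j) hm2]
    norm_num
  show 1 / qPochInf (q ^ 2) (-((q * x) ^ 2)) = (1 + x ^ 2) * (1 / qPochInf (q ^ 2) (-(x ^ 2)))
  rw [key, mul_one_div, ← div_div, div_self (by positivity : (1:ℝ) + x ^ 2 ≠ 0)]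

lemma hermite_step (hq : q ∈ Set.Ioo (0:ℝ) 1) (k : ℕ) (x : ℝ) :
    qHermiteII q k x - (1 + x ^ 2) * qHermiteII q k (q * x) =
      -(q ^ k) * x * qHermiteII q (k + 1) x := by
  set U : ℕ → ℝ := fun m =>
    if m < k / 2 + 1 then -(co q k m * q ^ (k - 2 * m)) * (x ^ 2 * x ^ (k - 2 * m)) else 0 with hUdef
  set W : ℕ → ℝ := fun m =>
    if m = 0 then 0 else co q k (m - 1) * (1 - q ^ (k - 2 * (m - 1))) * x ^ (k - 2 * (m - 1))
    with hWdef
  have hterm : ∀ m ∈ Finset.range ((k + 1) / 2 + 1),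
      -(q ^ k) * x * (co q (k + 1) m * x ^ (k + 1 - 2 * m)) = U m + W m := by
    intro m hm
    have hm2 : 2 * m ≤ k + 1 := by
      have := Finset.mem_range.mp hm; omega
    match m with
    | 0 =>
      norm_num [hUdef, hWdef, co_zero hq]
      ring
    | Nat.succ s =>
      have hcase : 2 * (s + 1) ≤ k ∨ 2 * (s + 1) = k + 1 := by omega
      rcases hcase with hle | heq
      · obtain ⟨r, hk⟩ : ∃ r, k = 2 * s + 2 + r := ⟨k - (2 * s + 2), by omega⟩
        subst hk
        simp only [hUdef, hWdef, Nat.succ_eq_add_one]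
        rw [if_pos (show s + 1 < (2 * s + 2 + r) / 2 + 1 by omega),
          if_neg (Nat.succ_ne_zero s)]
        rw [show 2 * s + 2 + r + 1 - 2 * (s + 1) = r + 1 by omega,
          show 2 * s + 2 + r - 2 * (s + 1) = r by omega,
          show s + 1 - 1 = s from rfl,
          show 2 * s + 2 + r - 2 * s = r + 2 by omega]
        linear_combination (-(x ^ (r + 2))) * coMain hq s r
      · have hk : k = 2 * s + 1 := by omega
        subst hk
        simp only [hUdef, hWdef, Nat.succ_eq_add_one]
        rw [if_neg (show ¬ (s + 1 < (2 * s + 1) / 2 + 1) by omega),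
          if_neg (Nat.succ_ne_zero s)]
        rw [show 2 * s + 1 + 1 - 2 * (s + 1) = 0 by omega,
          show s + 1 - 1 = s from rfl,
          show 2 * s + 1 - 2 * s = 1 by omega]
        linear_combination (-x) * coEdge hq s
  have hU : (∑ m ∈ Finset.range ((k + 1) / 2 + 1), U m) =
      ∑ m ∈ Finset.range (k / 2 + 1), -(co q k m * q ^ (k - 2 * m)) * (x ^ 2 * x ^ (k - 2 * m)) := by
    have hsub : Finset.range (k / 2 + 1) ⊆ Finset.range ((k + 1) / 2 + 1) :=
      Finset.range_subset_range.mpr (by omega)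
    rw [← Finset.sum_subset hsub (fun m _ hm => by
      rw [hUdef]; exact if_neg (fun hlt => hm (Finset.mem_range.mpr hlt)))]
    exact Finset.sum_congr rfl fun m hm => by
      rw [hUdef]; exact if_pos (Finset.mem_range.mp hm)
  have hW : (∑ m ∈ Finset.range ((k + 1) / 2 + 1), W m) =
      ∑ m ∈ Finset.range (k / 2 + 1),
        co q k m * (1 - q ^ (k - 2 * m)) * x ^ (k - 2 * m) := by
    rw [Finset.sum_range_succ']
    simp only [hWdef, Nat.succ_ne_zero, if_false, if_pos rfl, add_zero, Nat.add_sub_cancel]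
    rcases Nat.even_or_odd k with ⟨j, hj⟩ | ⟨j, hj⟩
    · rw [show (k + 1) / 2 = k / 2 by omega, Finset.sum_range_succ,
        show k - 2 * (k / 2) = 0 by omega]
      simp
    · rw [show (k + 1) / 2 = k / 2 + 1 by omega]
  have hL : qHermiteII q k x - (1 + x ^ 2) * qHermiteII q k (q * x) =
      (∑ m ∈ Finset.range (k / 2 + 1), co q k m * (1 - q ^ (k - 2 * m)) * x ^ (k - 2 * m)) +
        ∑ m ∈ Finset.range (k / 2 + 1),
          -(co q k m * q ^ (k - 2 * m)) * (x ^ 2 * x ^ (k - 2 * m)) := by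
    rw [qHermiteII_eq, qHermiteII_eq, Finset.mul_sum, ← Finset.sum_sub_distrib,
      ← Finset.sum_add_distrib]
    refine Finset.sum_congr rfl fun m _ => ?_
    rw [mul_pow]
    ring
  rw [hL, qHermiteII_eq, Finset.mul_sum, Finset.sum_congr rfl hterm,
    Finset.sum_add_distrib, hU, hW]
  ring

lemma deriv_step (hq : q ∈ Set.Ioo (0:ℝ) 1) (k : ℕ) {x : ℝ} (hx : x ≠ 0) :
    qDeriv q (fun y => qHermiteII q k y * qGauss q y) x =
      -(q ^ k) / (1 - q) * (qHermiteII q (k + 1) x * qGauss q x) := by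
  have h1q : (1 : ℝ) - q ≠ 0 := by have := hq.2; intro h; nlinarith
  show (qHermiteII q k x * qGauss q x - qHermiteII q k (q * x) * qGauss q (q * x)) /
      ((1 - q) * x) = _
  rw [qGauss_shift hq]
  have key : qHermiteII q k x * qGauss q x -
      qHermiteII q k (q * x) * ((1 + x ^ 2) * qGauss q x) =
      -(q ^ k) * x * qHermiteII q (k + 1) x * qGauss q x := by
    linear_combination qGauss q x * hermite_step hq k x
  rw [key]
  field_simp

lemma exp_succ' (l t : ℕ) :
    l * (t + 1) + (t + 1) * ((t + 1) - 1) / 2 = (l * t + t * (t - 1) / 2) + (l + t) := by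
  rcases t with _ | s
  · simp
  · have he : Even ((s + 1 + 1) * (s + 1)) := by
      have := Nat.even_mul_succ_self (s + 1)
      rwa [mul_comm] at this
    have he2 : Even ((s + 1) * s) := by
      have := Nat.even_mul_succ_self s
      rwa [mul_comm] at this
    obtain ⟨a, ha⟩ := he
    obtain ⟨b, hb⟩ := he2
    have h1 : (s + 1 + 1) * (s + 1) / 2 = a := by omega
    have h2 : (s + 1) * s / 2 = b := by omega
    have hab : a = b + (s + 1) := by nlinarith [ha, hb]
    simp only [Nat.add_sub_cancel]
    rw [h1, h2, hab]
    ring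

end Aux

/-- q-derivatives of discrete q-Hermite II polynomials times the q-Gaussian. -/
theorem stmt13 (q : ℝ) (hq : q ∈ Set.Ioo (0 : ℝ) 1) (l t : ℕ) (x : ℝ) (hx : x ≠ 0) :
    (qDeriv q)^[t] (fun y => qHermiteII q l y * qGauss q y) x =
      (-1) ^ t * q ^ (l * t + t * (t - 1) / 2) / (1 - q) ^ t *
        (qHermiteII q (l + t) x * qGauss q x) := by
  have hq' : q ∈ Set.Ioo (0 : ℝ) 1 := hq
  have h1q : (1 : ℝ) - q ≠ 0 := by have := hq'.2; intro h; nlinarith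
  induction t generalizing x with
  | zero => simp
  | succ t ih =>
    have hqx : q * x ≠ 0 := mul_ne_zero hq'.1.ne' hx
    rw [Function.iterate_succ_apply']
    have hd : qDeriv q ((qDeriv q)^[t] fun y => qHermiteII q l y * qGauss q y) x =
        (-1) ^ t * q ^ (l * t + t * (t - 1) / 2) / (1 - q) ^ t *
          qDeriv q (fun y => qHermiteII q (l + t) y * qGauss q y) x := by
      show ((qDeriv q)^[t] (fun y => qHermiteII q l y * qGauss q y) x -
          (qDeriv q)^[t] (fun y => qHermiteII q l y * qGauss q y) (q * x)) / ((1 - q) * x) = _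
      rw [ih x hx, ih (q * x) hqx]
      show _ = _ * ((qHermiteII q (l + t) x * qGauss q x -
          qHermiteII q (l + t) (q * x) * qGauss q (q * x)) / ((1 - q) * x))
      ring
    rw [hd, deriv_step hq' (l + t) hx, exp_succ' l t, pow_add, pow_add, pow_add]
    have hpt : ((1 : ℝ) - q) ^ t ≠ 0 := pow_ne_zero _ h1q
    show _ = _ * _ / _ * (qHermiteII q (l + t + 1) x * qGauss q x)
    field_simp
    ring
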